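/- For natural numbers m, n, k with m > k+1 and m > n > 0, M_{n,k}(m) = M_{n-1,k+2}(m+1), where M_{n,k}(m) is the number of merging paths from (0,0) to (n,m) with exactly k zeros. -/

import Mathlib

/-- Process an arrival sequence with right-lane count `R` and left-lane count `L`:
`false` (a red car) or a shorter-or-equal right lane sends the car right. -/
def procAux : ℕ → ℕ → List Bool → ℕ × ℕ
  | R, L, [] => (R, L)
  | R, L, bi :: rest =>
    if bi = false ∨ R ≤ L then procAux (R + 1) L rest else procAux R (L + 1) rest

/-- Final (right lane length, left lane length) of an arrival sequence. -/
def proc (b : List Bool) : ℕ × ℕ := procAux 0 0 b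

/-- The final length of the right lane. -/
def rlen (b : List Bool) : ℕ := (proc b).1

/-- Number of bounces: steps where `bᵢ = 1` and the lanes are equal. -/
def bncAux : ℕ → ℕ → List Bool → ℕ
  | _, _, [] => 0
  | R, L, bi :: rest =>
    if bi = true ∧ R = L then 1 + bncAux (R + 1) L rest
    else if bi = false ∨ R ≤ L then bncAux (R + 1) L rest
    else bncAux R (L + 1) rest

def bnc (b : List Bool) : ℕ := bncAux 0 0 b

/-- The parity vector: starts at `0` and toggles just after each bounce. -/
def pvAux : ℕ → ℕ → Bool → List Bool → List Bool
  | _, _, _, [] => []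
  | R, L, p, bi :: rest =>
    let p' := if bi = true ∧ R = L then !p else p
    if bi = false ∨ R ≤ L then p :: pvAux (R + 1) L p' rest
    else p :: pvAux R (L + 1) p' rest

def parityVec (b : List Bool) : List Bool := pvAux 0 0 false b

/-- `φ(b) = b + p(b)` bitwise mod 2. -/
def phi (b : List Bool) : List Bool := List.zipWith xor b (parityVec b)

/- ### Auxiliary machinery -/

lemma procAux_nil (R L : ℕ) : procAux R L [] = (R, L) := rfl

lemma procAux_cons_false (R L : ℕ) (rest : List Bool) :
    procAux R L (false :: rest) = procAux (R + 1) L rest := by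
  simp [procAux]

lemma procAux_cons_true_le {R L : ℕ} (h : R ≤ L) (rest : List Bool) :
    procAux R L (true :: rest) = procAux (R + 1) L rest := by
  simp [procAux, h]

lemma procAux_cons_true_gt {R L : ℕ} (h : ¬ R ≤ L) (rest : List Bool) :
    procAux R L (true :: rest) = procAux R (L + 1) rest := by
  simp [procAux, h]

lemma count_false_cons_false (l : List Bool) :
    (false :: l).count false = l.count false + 1 := by simp

lemma count_false_cons_true (l : List Bool) :
    (true :: l).count false = l.count false := by simp

lemma ofFn_cons (N : ℕ) (b : Bool) (a : Fin N → Bool) :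
    List.ofFn (Fin.cons b a : Fin (N + 1) → Bool) = b :: List.ofFn a := by
  simp [List.ofFn_succ]

lemma card_split (N : ℕ) (p : List Bool → Prop) [DecidablePred p] :
    (Finset.univ.filter fun c : Fin (N + 1) → Bool => p (List.ofFn c)).card
      = (Finset.univ.filter fun c : Fin N → Bool => p (false :: List.ofFn c)).card
      + (Finset.univ.filter fun c : Fin N → Bool => p (true :: List.ofFn c)).card := by
  classical
  have hinj0 : Function.Injective (fun a : Fin N → Bool => (Fin.cons false a : Fin (N+1) → Bool)) := by
    intro a a' h
    funext i
    have := congrFun h i.succ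
    simpa using this
  have hinj1 : Function.Injective (fun a : Fin N → Bool => (Fin.cons true a : Fin (N+1) → Bool)) := by
    intro a a' h
    funext i
    have := congrFun h i.succ
    simpa using this
  have hdisj : Disjoint
      ((Finset.univ.filter fun c : Fin N → Bool => p (false :: List.ofFn c)).image
        (fun a : Fin N → Bool => (Fin.cons false a : Fin (N+1) → Bool)))
      ((Finset.univ.filter fun c : Fin N → Bool => p (true :: List.ofFn c)).image
        (fun a : Fin N → Bool => (Fin.cons true a : Fin (N+1) → Bool))) := by
    refine Finset.disjoint_left.2 ?_
    intro x hx hy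
    simp only [Finset.mem_image, Finset.mem_filter, Finset.mem_univ, true_and] at hx hy
    obtain ⟨a, -, ha⟩ := hx
    obtain ⟨b, -, hb⟩ := hy
    have h0 : x 0 = false := by rw [← ha]; simp
    have h1 : x 0 = true := by rw [← hb]; simp
    rw [h0] at h1; exact Bool.false_ne_true h1
  have key : (Finset.univ.filter fun c : Fin (N + 1) → Bool => p (List.ofFn c))
      = ((Finset.univ.filter fun c : Fin N → Bool => p (false :: List.ofFn c)).image
          (fun a : Fin N → Bool => (Fin.cons false a : Fin (N+1) → Bool)))
        ∪ ((Finset.univ.filter fun c : Fin N → Bool => p (true :: List.ofFn c)).image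
          (fun a : Fin N → Bool => (Fin.cons true a : Fin (N+1) → Bool))) := by
    ext c
    simp only [Finset.mem_union, Finset.mem_image, Finset.mem_filter, Finset.mem_univ, true_and]
    constructor
    · intro hc
      have key2 : List.ofFn c = c 0 :: List.ofFn (Fin.tail c) := by
        rw [List.ofFn_succ]; rfl
      have hcc : (fun a : Fin N → Bool => (Fin.cons (c 0) a : Fin (N+1) → Bool)) (Fin.tail c) = c :=
        Fin.cons_self_tail c
      cases hb : c 0 with
      | false =>
          refine Or.inl ⟨Fin.tail c, ?_, by rw [← hb]; exact hcc⟩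
          rw [key2, hb] at hc; exact hc
      | true =>
          refine Or.inr ⟨Fin.tail c, ?_, by rw [← hb]; exact hcc⟩
          rw [key2, hb] at hc; exact hc
    · rintro (⟨a, ha, rfl⟩ | ⟨a, ha, rfl⟩) <;> · show p (List.ofFn (Fin.cons _ a)); rwa [ofFn_cons]
  rw [key, Finset.card_union_of_disjoint hdisj,
    Finset.card_image_of_injective _ hinj0, Finset.card_image_of_injective _ hinj1]

lemma split_spec (N R L k m n : ℕ) :
    (Finset.univ.filter fun c : Fin (N + 1) → Bool =>
        (List.ofFn c).count false = k ∧ procAux R L (List.ofFn c) = (m, n)).card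
      = (Finset.univ.filter fun c : Fin N → Bool =>
          (false :: List.ofFn c).count false = k ∧ procAux R L (false :: List.ofFn c) = (m, n)).card
      + (Finset.univ.filter fun c : Fin N → Bool =>
          (true :: List.ofFn c).count false = k ∧ procAux R L (true :: List.ofFn c) = (m, n)).card :=
  card_split N (fun b => b.count false = k ∧ procAux R L b = (m, n))

lemma filterF (N R L k m n : ℕ) :
    (Finset.univ.filter fun c : Fin N → Bool =>
        (false :: List.ofFn c).count false = k + 1 ∧ procAux R L (false :: List.ofFn c) = (m, n))
      = (Finset.univ.filter fun c : Fin N → Bool =>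
          (List.ofFn c).count false = k ∧ procAux (R + 1) L (List.ofFn c) = (m, n)) := by
  refine Finset.filter_congr fun c _ => ?_
  rw [procAux_cons_false, count_false_cons_false]
  constructor
  · rintro ⟨h1, h2⟩; exact ⟨by omega, h2⟩
  · rintro ⟨h1, h2⟩; exact ⟨by omega, h2⟩

lemma filterF0 (N R L m n : ℕ) :
    (Finset.univ.filter fun c : Fin N → Bool =>
        (false :: List.ofFn c).count false = 0 ∧ procAux R L (false :: List.ofFn c) = (m, n)) = ∅ := by
  refine Finset.filter_false_of_mem fun c _ => ?_
  rintro ⟨h1, -⟩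
  rw [count_false_cons_false] at h1
  omega

lemma filterT_le {R L : ℕ} (h : R ≤ L) (N k m n : ℕ) :
    (Finset.univ.filter fun c : Fin N → Bool =>
        (true :: List.ofFn c).count false = k ∧ procAux R L (true :: List.ofFn c) = (m, n))
      = (Finset.univ.filter fun c : Fin N → Bool =>
          (List.ofFn c).count false = k ∧ procAux (R + 1) L (List.ofFn c) = (m, n)) := by
  refine Finset.filter_congr fun c _ => ?_
  rw [procAux_cons_true_le h, count_false_cons_true]

lemma filterT_gt {R L : ℕ} (h : ¬ R ≤ L) (N k m n : ℕ) :
    (Finset.univ.filter fun c : Fin N → Bool =>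
        (true :: List.ofFn c).count false = k ∧ procAux R L (true :: List.ofFn c) = (m, n))
      = (Finset.univ.filter fun c : Fin N → Bool =>
          (List.ofFn c).count false = k ∧ procAux R (L + 1) (List.ofFn c) = (m, n)) := by
  refine Finset.filter_congr fun c _ => ?_
  rw [procAux_cons_true_gt h, count_false_cons_true]

/-- Truncated binomial coefficient with integer lower index. -/
def mcc (l : ℕ) (z : ℤ) : ℕ := if 0 ≤ z then l.choose z.toNat else 0

lemma mcc_neg {l : ℕ} {z : ℤ} (h : z < 0) : mcc l z = 0 := if_neg (by omega)

lemma mcc_pascal (l : ℕ) (z : ℤ) : mcc (l + 1) z = mcc l z + mcc l (z - 1) := by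
  unfold mcc
  by_cases h1 : 0 ≤ z
  · by_cases h2 : 0 ≤ z - 1
    · rw [if_pos h1, if_pos h1, if_pos h2]
      have hz : z.toNat = (z - 1).toNat + 1 := by omega
      rw [hz, Nat.choose_succ_succ]
      simp only [Nat.succ_eq_add_one]
      omega
    · have hz0 : z = 0 := by omega
      subst hz0; simp
  · rw [if_neg h1, if_neg h1, if_neg (by omega)]

lemma mcc_symm (N a : ℕ) : mcc N ((N : ℤ) - a) = N.choose a := by
  by_cases h : a ≤ N
  · unfold mcc
    rw [if_pos (by omega)]
    have ht : ((N : ℤ) - a).toNat = N - a := by omega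
    rw [ht, Nat.choose_symm h]
  · unfold mcc
    rw [if_neg (by omega)]
    exact (Nat.choose_eq_zero_of_lt (by omega)).symm

/-- If there are more zeros than possible up-moves, the count is zero. -/
lemma lemZero (m n N : ℕ) : ∀ R L k : ℕ, N + m + L < 2 * k + R + n →
    (Finset.univ.filter fun c : Fin N → Bool =>
        (List.ofFn c).count false = k ∧ procAux R L (List.ofFn c) = (m, n)).card = 0 := by
  induction N with
  | zero =>
      intro R L k h
      rw [Finset.card_eq_zero]
      refine Finset.filter_false_of_mem fun c _ => ?_
      simp only [List.ofFn_zero, List.count_nil, procAux_nil, Prod.mk.injEq]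
      rintro ⟨h1, h2, h3⟩
      omega
  | succ N ih =>
      intro R L k h
      rw [split_spec]
      by_cases hRL : R ≤ L
      · rcases k with _ | k'
        · rw [filterF0, filterT_le hRL]
          rw [Finset.card_empty, ih (R + 1) L 0 (by omega)]
        · rw [filterF, filterT_le hRL]
          rw [ih (R + 1) L k' (by omega), ih (R + 1) L (k' + 1) (by omega)]
      · rcases k with _ | k'
        · rw [filterF0, filterT_gt hRL]
          rw [Finset.card_empty, ih R (L + 1) 0 (by omega)]
        · rw [filterF, filterT_gt hRL]
          rw [ih (R + 1) L k' (by omega), ih R (L + 1) (k' + 1) (by omega)]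

/-- The boundary case: zeros equal to up-moves (no bounce ever marked). -/
lemma lemBall (m n : ℕ) (hmn : n ≤ m) (N : ℕ) : ∀ R L k : ℕ, L ≤ R →
    N + R + L = m + n → 2 * k + R + n = N + m + L →
    (Finset.univ.filter fun c : Fin N → Bool =>
        (List.ofFn c).count false = k ∧ procAux R L (List.ofFn c) = (m, n)).card
      + N.choose (k + (R - L) + 1) = N.choose k := by
  induction N with
  | zero =>
      intro R L k h1 h2 h3
      by_cases hc : k = 0 ∧ R = m ∧ L = n
      · obtain ⟨rfl, rfl, rfl⟩ := hc
        rw [Finset.filter_true_of_mem]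
        · rw [Finset.card_univ]
          have hcard : Fintype.card (Fin 0 → Bool) = 1 := by simp
          rw [hcard, Nat.choose_zero_succ]
          simp
        · intro c _
          constructor
          · simp
          · rw [show (List.ofFn c) = [] by simp, procAux_nil]
      · rw [Finset.filter_false_of_mem, Finset.card_empty]
        · have hk : k ≠ 0 := by
            intro hk0
            exact hc ⟨hk0, by omega, by omega⟩
          obtain ⟨k', rfl⟩ := Nat.exists_eq_succ_of_ne_zero hk
          rw [Nat.choose_zero_succ, Nat.choose_zero_succ]
        · intro c _
          simp only [List.ofFn_zero, List.count_nil, procAux_nil, Prod.mk.injEq]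
          rintro ⟨h4, h5, h6⟩
          exact hc ⟨h4.symm, h5, h6⟩
  | succ N ih =>
      intro R L k h1 h2 h3
      rw [split_spec]
      by_cases hRL : R ≤ L
      · -- R = L
        rcases k with _ | k'
        · omega
        · rw [filterF, filterT_le hRL]
          rw [show R - L = 0 from by omega]
          simp only [Nat.add_zero]
          have hT := lemZero m n N (R + 1) L (k' + 1) (by omega)
          have hF := ih (R + 1) L k' (by omega) (by omega) (by omega)
          have e1 : k' + (R + 1 - L) + 1 = k' + 1 + 1 := by omega
          rw [e1] at hF
          have p1 : (N + 1).choose (k' + 1 + 1) = N.choose (k' + 1) + N.choose (k' + 1 + 1) :=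
            Nat.choose_succ_succ _ _
          have p2 : (N + 1).choose (k' + 1) = N.choose k' + N.choose (k' + 1) :=
            Nat.choose_succ_succ _ _
          omega
      · rcases k with _ | k'
        · rw [filterF0, filterT_gt hRL, Finset.card_empty]
          have hT := ih R (L + 1) 0 (by omega) (by omega) (by omega)
          have hz1 : N.choose (0 + (R - (L + 1)) + 1) = 0 :=
            Nat.choose_eq_zero_of_lt (by omega)
          have hz2 : (N + 1).choose (0 + (R - L) + 1) = 0 :=
            Nat.choose_eq_zero_of_lt (by omega)
          have c1 : N.choose 0 = 1 := Nat.choose_zero_right N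
          have c2 : (N + 1).choose 0 = 1 := Nat.choose_zero_right (N + 1)
          omega
        · rw [filterF, filterT_gt hRL]
          have hF := ih (R + 1) L k' (by omega) (by omega) (by omega)
          have hT := ih R (L + 1) (k' + 1) (by omega) (by omega) (by omega)
          have e1 : k' + (R + 1 - L) + 1 = k' + 1 + (R - L) + 1 := by omega
          rw [e1] at hF
          have e2 : k' + 1 + (R - (L + 1)) + 1 = k' + 1 + (R - L) := by omega
          rw [e2] at hT
          have p1 : (N + 1).choose (k' + 1 + (R - L) + 1)
              = N.choose (k' + 1 + (R - L)) + N.choose (k' + 1 + (R - L) + 1) :=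
            Nat.choose_succ_succ _ _
          have p2 : (N + 1).choose (k' + 1) = N.choose k' + N.choose (k' + 1) :=
            Nat.choose_succ_succ _ _
          omega

/-- The main closed form. -/
lemma lemMain (m n : ℕ) (hmn : n < m) (N : ℕ) : ∀ R L k : ℕ, L ≤ R →
    N + R + L = m + n → 2 * k + R + n + 2 ≤ N + m + L →
    (Finset.univ.filter fun c : Fin N → Bool =>
        (List.ofFn c).count false = k ∧ procAux R L (List.ofFn c) = (m, n)).card
      + mcc N ((k : ℤ) - 1 - m + n) = mcc N ((k : ℤ) + 1 - m + n) := by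
  induction N with
  | zero =>
      intro R L k h1 h2 h3
      rw [Finset.filter_false_of_mem, Finset.card_empty]
      · rw [mcc_neg (by omega), mcc_neg (by omega)]
      · intro c _
        simp only [List.ofFn_zero, List.count_nil, procAux_nil, Prod.mk.injEq]
        rintro ⟨h4, h5, h6⟩
        omega
  | succ N ih =>
      intro R L k h1 h2 h3
      rw [split_spec]
      -- false-branch equation, valid for every k
      have EF : (Finset.univ.filter fun c : Fin N → Bool =>
            (false :: List.ofFn c).count false = k ∧
              procAux R L (false :: List.ofFn c) = (m, n)).card
          + mcc N ((k : ℤ) - 2 - m + n) = mcc N ((k : ℤ) - m + n) := by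
        rcases k with _ | k'
        · rw [filterF0, Finset.card_empty, mcc_neg (by omega), mcc_neg (by omega)]
        · rw [filterF]
          have h := ih (R + 1) L k' (by omega) (by omega) (by omega)
          have e1 : (k' : ℤ) - 1 - m + n = ((k' + 1 : ℕ) : ℤ) - 2 - m + n := by push_cast; ring
          have e2 : (k' : ℤ) + 1 - m + n = ((k' + 1 : ℕ) : ℤ) - m + n := by push_cast; ring
          rw [e1, e2] at h
          exact h
      by_cases hRL : R ≤ L
      · -- R = L case
        by_cases hb : 2 * k + (R + 1) + n + 2 ≤ N + m + L
        · -- interior case: both branches by IH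
          rw [filterT_le hRL]
          have ET := ih (R + 1) L k (by omega) (by omega) (by omega)
          have q1 := mcc_pascal N ((k : ℤ) - 1 - m + n)
          have q2 := mcc_pascal N ((k : ℤ) + 1 - m + n)
          have e1 : (k : ℤ) - 1 - m + n - 1 = (k : ℤ) - 2 - m + n := by ring
          have e2 : (k : ℤ) + 1 - m + n - 1 = (k : ℤ) - m + n := by ring
          rw [e1] at q1
          rw [e2] at q2
          omega
        · -- boundary case: true branch via lemBall
          rw [filterT_le hRL]
          have heq : 2 * k + (R + 1) + n = N + m + L := by omega
          have hT := lemBall m n (le_of_lt hmn) N (R + 1) L k (by omega) (by omega) (by omega)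
          have eT : k + (R + 1 - L) + 1 = k + 2 := by omega
          rw [eT] at hT
          -- rewrite all mcc's as choose's
          have r1 : (k : ℤ) + 1 - m + n = (N : ℤ) - k := by omega
          have r2 : (k : ℤ) - 1 - m + n = (N : ℤ) - (k + 2 : ℕ) := by push_cast; omega
          have r3 : (k : ℤ) - m + n = (N : ℤ) - (k + 1 : ℕ) := by push_cast; omega
          have r4 : (k : ℤ) - 2 - m + n = (N : ℤ) - (k + 3 : ℕ) := by push_cast; omega
          have q1 := mcc_pascal N ((k : ℤ) - 1 - m + n)
          have q2 := mcc_pascal N ((k : ℤ) + 1 - m + n)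
          have e1 : (k : ℤ) - 1 - m + n - 1 = (k : ℤ) - 2 - m + n := by ring
          have e2 : (k : ℤ) + 1 - m + n - 1 = (k : ℤ) - m + n := by ring
          rw [e1] at q1
          rw [e2] at q2
          have s0 : mcc N ((k : ℤ) + 1 - m + n) = N.choose k := by
            rw [r1]; exact mcc_symm N k
          have s2 : mcc N ((k : ℤ) - 1 - m + n) = N.choose (k + 2) := by
            rw [r2]; exact mcc_symm N (k + 2)
          have s1 : mcc N ((k : ℤ) - m + n) = N.choose (k + 1) := by
            rw [r3]; exact mcc_symm N (k + 1)
          have s3 : mcc N ((k : ℤ) - 2 - m + n) = N.choose (k + 3) := by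
            rw [r4]; exact mcc_symm N (k + 3)
          omega
      · -- R > L case
        rw [filterT_gt hRL]
        have ET := ih R (L + 1) k (by omega) (by omega) (by omega)
        have q1 := mcc_pascal N ((k : ℤ) - 1 - m + n)
        have q2 := mcc_pascal N ((k : ℤ) + 1 - m + n)
        have e1 : (k : ℤ) - 1 - m + n - 1 = (k : ℤ) - 2 - m + n := by ring
        have e2 : (k : ℤ) + 1 - m + n - 1 = (k : ℤ) - m + n := by ring
        rw [e1] at q1
        rw [e2] at q2
        omega

theorem stmt_13 (m n k : ℕ) (h1 : m > k + 1) (h2 : m > n) (h3 : 0 < n) :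
    (Finset.univ.filter (fun c : Fin (m + n) → Bool =>
        (List.ofFn c).count false = k ∧ proc (List.ofFn c) = (m, n))).card =
      (Finset.univ.filter (fun c : Fin (m + n) → Bool =>
        (List.ofFn c).count false = k + 2 ∧ proc (List.ofFn c) = (m + 1, n - 1))).card := by
  simp only [proc]
  have H1 := lemMain m n h2 (m + n) 0 0 k (le_refl 0) (by omega) (by omega)
  have H2 := lemMain (m + 1) (n - 1) (by omega) (m + n) 0 0 (k + 2) (le_refl 0)
      (by omega) (by omega)
  have e1 : ((k + 2 : ℕ) : ℤ) - 1 - (m + 1 : ℕ) + ((n - 1 : ℕ) : ℤ) = (k : ℤ) - 1 - m + n := by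
    omega
  have e2 : ((k + 2 : ℕ) : ℤ) + 1 - (m + 1 : ℕ) + ((n - 1 : ℕ) : ℤ) = (k : ℤ) + 1 - m + n := by
    omega
  rw [e1, e2] at H2
  have H3 := Nat.add_right_cancel (H1.trans H2.symm)
  convert H3 using 2 <;> (ext c; exact ⟨fun h => Finset.mem_filter.2 ⟨Finset.mem_univ _, (Finset.mem_filter.1 h).2⟩, fun h => Finset.mem_filter.2 ⟨Finset.mem_univ _, (Finset.mem_filter.1 h).2⟩⟩)
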